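/- arXiv:2401.05795 — 3 statements merged into one kernel-verified Lean document; each statement's English description precedes it below -/
import Mathlib

section
/- Let w = (u,v) solve u' = u(1+O₁), v' = -v(1+O₁) with |O₁| ≤ Cρ in V_ρ, with initial condition in Σ¹_{a,δ} = {0 < u < δ, v = a} where 0 < δ < a/2 ≤ ρ/2. Then the solution exits through {u = a} at a time s*, and at that time v(s*) satisfies u₀^{1+3Ca} ≤ v(s*) ≤ u₀^{1-2Ca}, where u₀ = u(0). -/
/-- Gronwall upper bound: if `f' ≤ k f` on `[0,s1]`, then `f s1 * exp(-k s1) ≤ f 0`. -/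
lemma gronwall_upper_aux {s1 k : ℝ} (hs : 0 ≤ s1) {f : ℝ → ℝ}
    (hf : ∀ s ∈ Set.Icc (0:ℝ) s1, HasDerivAt f (deriv f s) s)
    (hk : ∀ s ∈ Set.Icc (0:ℝ) s1, deriv f s ≤ k * f s) :
    f s1 * Real.exp (-(k * s1)) ≤ f 0 := by
  set g : ℝ → ℝ := fun s => f s * Real.exp (-(k * s)) with hgdef
  have hg : ∀ s ∈ Set.Icc (0:ℝ) s1,
      HasDerivAt g ((deriv f s - k * f s) * Real.exp (-(k * s))) s := by
    intro s hs'
    have he : HasDerivAt (fun x : ℝ => Real.exp (-(k * x)))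
        (Real.exp (-(k * s)) * -(k * 1)) s :=
      (((hasDerivAt_id s).const_mul k).neg).exp
    have : HasDerivAt (fun y => f y * Real.exp (-(k * y))) _ s := (hf s hs').mul he
    convert this using 1
    ring
  have cont : ContinuousOn g (Set.Icc 0 s1) :=
    fun s hs' => (hg s hs').continuousAt.continuousWithinAt
  have hd : ∀ s ∈ interior (Set.Icc (0:ℝ) s1), deriv g s ≤ 0 := by
    rw [interior_Icc]
    intro s hs'
    rw [(hg s (Set.Ioo_subset_Icc_self hs')).deriv]
    have h1 := hk s (Set.Ioo_subset_Icc_self hs')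
    have h2 : deriv f s - k * f s ≤ 0 := by linarith
    exact mul_nonpos_of_nonpos_of_nonneg h2 (Real.exp_nonneg _)
  have hdiff : DifferentiableOn ℝ g (interior (Set.Icc (0:ℝ) s1)) := by
    rw [interior_Icc]
    exact fun s hs' =>
      ((hg s (Set.Ioo_subset_Icc_self hs')).differentiableAt).differentiableWithinAt
  have hanti := antitoneOn_of_deriv_nonpos (convex_Icc (0:ℝ) s1) cont hdiff hd
  have := hanti (Set.left_mem_Icc.mpr hs) (Set.right_mem_Icc.mpr hs) hs
  simpa [hgdef] using this

/-- Gronwall lower bound: if `f' ≥ k f` on `[0,s1]`, then `f 0 ≤ f s1 * exp(-k s1)`. -/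
lemma gronwall_lower_aux {s1 k : ℝ} (hs : 0 ≤ s1) {f : ℝ → ℝ}
    (hf : ∀ s ∈ Set.Icc (0:ℝ) s1, HasDerivAt f (deriv f s) s)
    (hk : ∀ s ∈ Set.Icc (0:ℝ) s1, k * f s ≤ deriv f s) :
    f 0 ≤ f s1 * Real.exp (-(k * s1)) := by
  set g : ℝ → ℝ := fun s => f s * Real.exp (-(k * s)) with hgdef
  have hg : ∀ s ∈ Set.Icc (0:ℝ) s1,
      HasDerivAt g ((deriv f s - k * f s) * Real.exp (-(k * s))) s := by
    intro s hs'
    have he : HasDerivAt (fun x : ℝ => Real.exp (-(k * x)))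
        (Real.exp (-(k * s)) * -(k * 1)) s :=
      (((hasDerivAt_id s).const_mul k).neg).exp
    have : HasDerivAt (fun y => f y * Real.exp (-(k * y))) _ s := (hf s hs').mul he
    convert this using 1
    ring
  have cont : ContinuousOn g (Set.Icc 0 s1) :=
    fun s hs' => (hg s hs').continuousAt.continuousWithinAt
  have hd : ∀ s ∈ interior (Set.Icc (0:ℝ) s1), 0 ≤ deriv g s := by
    rw [interior_Icc]
    intro s hs'
    rw [(hg s (Set.Ioo_subset_Icc_self hs')).deriv]
    have h1 := hk s (Set.Ioo_subset_Icc_self hs')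
    have h2 : 0 ≤ deriv f s - k * f s := by linarith
    exact mul_nonneg h2 (Real.exp_nonneg _)
  have hdiff : DifferentiableOn ℝ g (interior (Set.Icc (0:ℝ) s1)) := by
    rw [interior_Icc]
    exact fun s hs' =>
      ((hg s (Set.Ioo_subset_Icc_self hs')).differentiableAt).differentiableWithinAt
  have hmono := monotoneOn_of_deriv_nonneg (convex_Icc (0:ℝ) s1) cont hdiff hd
  have := hmono (Set.left_mem_Icc.mpr hs) (Set.right_mem_Icc.mpr hs) hs
  simpa [hgdef] using this

set_option maxHeartbeats 1600000 in
/-- A solution of `u' = u(1+O₁)`, `v' = -v(1+O₁)`, `|O₁| ≤ Ca`, starting on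
`Σ¹_{a,δ} = {0 < u < δ, v = a}` with `0 < δ < a/2 ≤ ρ/2`, exits through `{u = a}`
at a time `s*` where `u₀^{1+3Ca} ≤ v(s*) ≤ u₀^{1-2Ca}`. -/
theorem stmt_8 (C ρ a δ u₀ sstar : ℝ) (hC : 0 < C) (hρ : ρ < 1) (ha : 0 < a)
    (haρ : a ≤ ρ) (hCa : C * a < 1 / 8) (hδ : 0 < δ) (hδa : δ < a / 2)
    (u v : ℝ → ℝ) (hu0 : u 0 = u₀) (hv0 : v 0 = a)
    (hu₀ : 0 < u₀) (hu₀δ : u₀ < δ)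
    (hs : 0 ≤ sstar) (hexit : u sstar = a)
    (hud : ∀ s ∈ Set.Icc (0:ℝ) sstar, HasDerivAt u (deriv u s) s)
    (hvd : ∀ s ∈ Set.Icc (0:ℝ) sstar, HasDerivAt v (deriv v s) s)
    (hui : ∀ s ∈ Set.Icc (0:ℝ) sstar,
      (1 - C * a) * u s ≤ deriv u s ∧ deriv u s ≤ (1 + C * a) * u s)
    (hvi : ∀ s ∈ Set.Icc (0:ℝ) sstar,
      -(1 + C * a) * v s ≤ deriv v s ∧ deriv v s ≤ -(1 - C * a) * v s)
    (hin : ∀ s ∈ Set.Icc (0:ℝ) sstar, 0 < u s ∧ u s ≤ a ∧ 0 < v s ∧ v s ≤ a) :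
    u₀ ^ ((1:ℝ) + 3 * C * a) ≤ v sstar ∧ v sstar ≤ u₀ ^ ((1:ℝ) - 2 * C * a) := by
  set c := C * a with hc
  have hc0 : 0 < c := mul_pos hC ha
  have hc8 : c < 1 / 8 := hCa
  have ha1 : a < 1 := lt_of_le_of_lt haρ hρ
  have hu₀1 : u₀ < 1 := by linarith
  have hv0' : 0 < v sstar := (hin sstar (Set.right_mem_Icc.mpr hs)).2.2.1
  -- Gronwall bounds
  have h1 : a * Real.exp (-((1 + c) * sstar)) ≤ u₀ := by
    have := gronwall_upper_aux (k := 1 + c) hs hud (fun s hs' => (hui s hs').2)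
    rwa [hexit, hu0] at this
  have h2 : u₀ ≤ a * Real.exp (-((1 - c) * sstar)) := by
    have := gronwall_lower_aux (k := 1 - c) hs hud (fun s hs' => (hui s hs').1)
    rwa [hexit, hu0] at this
  have h3 : v sstar * Real.exp (-(-(1 - c) * sstar)) ≤ a := by
    have := gronwall_upper_aux (k := -(1 - c)) hs hvd (fun s hs' => by
      have := (hvi s hs').2; linarith)
    rwa [hv0] at this
  have h4 : a ≤ v sstar * Real.exp (-(-(1 + c) * sstar)) := by
    have := gronwall_lower_aux (k := -(1 + c)) hs hvd (fun s hs' => by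
      have := (hvi s hs').1; linarith)
    rwa [hv0] at this
  -- take logs
  set la := Real.log a with hla
  set lu := Real.log u₀ with hlu
  set lv := Real.log (v sstar) with hlv
  have hla0 : la < 0 := Real.log_neg ha ha1
  have hlu0 : lu < 0 := Real.log_neg hu₀ hu₀1
  have log1 : la + (-((1 + c) * sstar)) ≤ lu := by
    have := Real.log_le_log (by positivity) h1
    rwa [Real.log_mul (ne_of_gt ha) (ne_of_gt (Real.exp_pos _)), Real.log_exp] at this
  have log2 : lu ≤ la + (-((1 - c) * sstar)) := by
    have := Real.log_le_log hu₀ h2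
    rwa [Real.log_mul (ne_of_gt ha) (ne_of_gt (Real.exp_pos _)), Real.log_exp] at this
  have log3 : lv + (-(-(1 - c) * sstar)) ≤ la := by
    have := Real.log_le_log (by positivity) h3
    rwa [Real.log_mul (ne_of_gt hv0') (ne_of_gt (Real.exp_pos _)), Real.log_exp] at this
  have log4 : la ≤ lv + (-(-(1 + c) * sstar)) := by
    have := Real.log_le_log ha h4
    rwa [Real.log_mul (ne_of_gt hv0') (ne_of_gt (Real.exp_pos _)), Real.log_exp] at this
  -- key arithmetic inequalities on logs
  have h1c : (0:ℝ) < 1 - c := by linarith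
  have h2c : (0:ℝ) < 1 + c := by linarith
  have hE : 0 ≤ c * (1 - 3 * c) * (-lu) :=
    mul_nonneg (mul_nonneg hc0.le (by linarith)) (neg_nonneg.mpr hlu0.le)
  have hF : 0 ≤ c * c * (-lu) :=
    mul_nonneg (mul_nonneg hc0.le hc0.le) (neg_nonneg.mpr hlu0.le)
  have hD : 0 ≤ c * (-la) := mul_nonneg hc0.le (neg_nonneg.mpr hla0.le)
  have hstep1 : (1 + c) * ((1 - c) * sstar) ≤ (1 + c) * (la - lu) :=
    mul_le_mul_of_nonneg_left (by linarith [log2]) h2c.le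
  have hstep2 : (1 - c) * (la - lu) ≤ (1 - c) * ((1 + c) * sstar) :=
    mul_le_mul_of_nonneg_left (by linarith [log1]) h1c.le
  have key1 : (1 + 3 * c) * lu ≤ lv := by
    have h5 : (1 - c) * ((1 + 3 * c) * lu) ≤ (1 - c) * lv := by
      nlinarith [log4, hstep1, hE, hD]
    exact (mul_le_mul_iff_right₀ h1c).mp h5
  have key2 : lv ≤ (1 - 2 * c) * lu := by
    have h6 : (1 + c) * lv ≤ (1 + c) * ((1 - 2 * c) * lu) := by
      nlinarith [log3, hstep2, hF, hD]
    exact (mul_le_mul_iff_right₀ h2c).mp h6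
  constructor
  · have : u₀ ^ ((1:ℝ) + 3 * C * a) = Real.exp (lu * (1 + 3 * c)) := by
      rw [Real.rpow_def_of_pos hu₀, hlu, hc]; ring_nf
    rw [this]
    calc Real.exp (lu * (1 + 3 * c)) ≤ Real.exp lv := by
          apply Real.exp_le_exp.mpr; nlinarith [key1]
      _ = v sstar := Real.exp_log hv0'
  · have : u₀ ^ ((1:ℝ) - 2 * C * a) = Real.exp (lu * (1 - 2 * c)) := by
      rw [Real.rpow_def_of_pos hu₀, hlu, hc]; ring_nf
    rw [this]
    calc v sstar = Real.exp lv := (Real.exp_log hv0').symm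
      _ ≤ Real.exp (lu * (1 - 2 * c)) := by
          apply Real.exp_le_exp.mpr; nlinarith [key2]
end

section
/- Let L⁺_in(v,θ) = Σ_{k≥1} (V^[k]/8) e^{ik(θ-v)} ∫_{-∞}^v s^{-2} e^{iks} ds + (conjugate terms for k ≤ -1), i.e., L⁺_in = G(V(θ)/(8v²)) where G integrates along characteristics from -∞. If V^[0] = 0 and |V^[k]| ≤ Ke^{-|k|σ₀}, then L⁺_in, ∂_θ L⁺_in belong to the weighted space Y₂ (i.e., sup_v |v² L⁺_in^[k](v)| e^{|k|σ} summable) and ∂_v L⁺_in ∈ Y₃, with norms bounded by a constant independent of κ. -/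
open MeasureTheory

/-- The inner sectorial domain `D⁺_{κ,in}`. -/
def Din (β₁ κ : ℝ) : Set ℂ :=
  {v : ℂ | v.im < -Real.tan β₁ * v.re - κ ∨ Real.tan β₁ * v.re + κ < v.im}

/-- The Fourier coefficients of `L⁺_in`: `L⁺_in^[k](v) = (V^[k]/8)∫_{-∞}^v s^{-2} e^{ik(s-v)} ds`. -/
noncomputable def Lin (Vk : ℤ → ℂ) (k : ℤ) (v : ℂ) : ℂ :=
  (Vk k / 8) * ∫ s in Set.Iic (0:ℝ), ((v + (s : ℂ)) ^ 2)⁻¹ * Complex.exp (Complex.I * k * s)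

open Set Real Filter Topology
set_option maxHeartbeats 1000000

noncomputable def cst (β₁ : ℝ) : ℝ := min (Real.sin β₁ ^ 2 / 5) (1/8)

lemma cst_pos {β₁ : ℝ} (hβ : 0 < β₁) (hβ' : β₁ < Real.pi / 2) : 0 < cst β₁ := by
  have hs : 0 < Real.sin β₁ := Real.sin_pos_of_pos_of_lt_pi hβ (by linarith [Real.pi_pos])
  exact lt_min (by positivity) (by norm_num)

lemma cst_le {β₁ : ℝ} : cst β₁ ≤ 1/8 := min_le_right _ _

lemma Din_ne_zero {β₁ κ : ℝ} (hκ : 1 ≤ κ) {v : ℂ} (hv : v ∈ Din β₁ κ) : v ≠ 0 := by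
  rintro rfl
  simp only [Din, Set.mem_setOf_eq, Complex.zero_im, Complex.zero_re, mul_zero] at hv
  rcases hv with h | h <;> linarith

lemma key_ineq {β₁ : ℝ} (hβ : 0 < β₁) (hβ' : β₁ < Real.pi / 2) {κ : ℝ} (hκ : 1 ≤ κ)
    {v : ℂ} (hv : v ∈ Din β₁ κ) {s : ℝ} (hs : s ≤ 0) :
    cst β₁ * (‖v‖ ^ 2 + s ^ 2) ≤ ‖v + s‖ ^ 2 := by
  have habs : ‖v‖ ^ 2 = v.re ^ 2 + v.im ^ 2 := by
    rw [Complex.sq_norm, Complex.normSq_apply]; ring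
  have habs2 : ‖v + s‖ ^ 2 = (v.re + s) ^ 2 + v.im ^ 2 := by
    rw [Complex.sq_norm, Complex.normSq_apply]
    simp [Complex.add_re, Complex.add_im]; ring
  set a := v.re; set b := v.im
  rw [habs, habs2]
  have hc8 : cst β₁ ≤ 1/8 := cst_le
  rcases le_or_gt a 0 with ha | ha
  · nlinarith [sq_nonneg (a + s), sq_nonneg s, sq_nonneg a, mul_nonneg (neg_nonneg.2 ha) (neg_nonneg.2 hs)]
  · -- a > 0 : |b| > tan β₁ * a
    have hC : 0 < Real.cos β₁ := Real.cos_pos_of_mem_Ioo ⟨by linarith [Real.pi_pos], hβ'⟩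
    have hS : 0 < Real.sin β₁ := Real.sin_pos_of_pos_of_lt_pi hβ (by linarith [Real.pi_pos])
    have ht : Real.tan β₁ = Real.sin β₁ / Real.cos β₁ := Real.tan_eq_sin_div_cos β₁
    have hsc : Real.sin β₁ ^ 2 + Real.cos β₁ ^ 2 = 1 := Real.sin_sq_add_cos_sq β₁
    have hb2 : Real.sin β₁ ^ 2 * (a ^ 2 + b ^ 2) ≤ b ^ 2 := by
      have htb : Real.tan β₁ * a < |b| := by
        rcases hv with h | h
        · have : Real.tan β₁ * a + κ < -b := by linarith
          calc Real.tan β₁ * a < Real.tan β₁ * a + κ := by linarith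
            _ < -b := this
            _ ≤ |b| := neg_le_abs b
        · have : Real.tan β₁ * a + κ < b := h
          calc Real.tan β₁ * a < Real.tan β₁ * a + κ := by linarith
            _ < b := this
            _ ≤ |b| := le_abs_self b
      have htpos : 0 < Real.tan β₁ := by rw [ht]; positivity
      have h1 : Real.tan β₁ ^ 2 * a ^ 2 ≤ b ^ 2 := by
        have := sq_le_sq' (by nlinarith [abs_nonneg b] : -|b| ≤ Real.tan β₁ * a) htb.le
        calc Real.tan β₁ ^ 2 * a ^ 2 = (Real.tan β₁ * a) ^ 2 := by ring
          _ ≤ |b| ^ 2 := this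
          _ = b ^ 2 := sq_abs b
      have h2 : Real.sin β₁ ^ 2 * a ^ 2 ≤ Real.cos β₁ ^ 2 * b ^ 2 := by
        have := mul_le_mul_of_nonneg_left h1 (sq_nonneg (Real.cos β₁))
        rw [ht] at this
        have hcne : Real.cos β₁ ≠ 0 := ne_of_gt hC
        field_simp at this
        nlinarith [this]
      nlinarith [sq_nonneg b]
    have hcS : cst β₁ ≤ Real.sin β₁ ^ 2 / 5 := min_le_left _ _
    rcases le_or_gt (s^2) (4 * (a^2 + b^2)) with hss | hss
    · have h5 : a ^ 2 + b ^ 2 + s ^ 2 ≤ 5 * (a ^ 2 + b ^ 2) := by linarith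
      have : cst β₁ * (a ^ 2 + b ^ 2 + s ^ 2) ≤ (Real.sin β₁ ^ 2 / 5) * (5 * (a^2+b^2)) := by
        apply mul_le_mul hcS h5 (by positivity) (by positivity)
      calc cst β₁ * (a ^ 2 + b ^ 2 + s ^ 2) ≤ Real.sin β₁ ^ 2 * (a^2+b^2) := by linarith
        _ ≤ b ^ 2 := hb2
        _ ≤ (a + s)^2 + b^2 := by nlinarith [sq_nonneg (a+s)]
    · -- s² > 4(a²+b²), so -s > 2a and (a+s)² ≥ s²/4
      have h4a : 4 * a ^ 2 < s ^ 2 := by nlinarith [sq_nonneg b]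
      have hneg : 2 * a < -s := by
        by_contra hcon
        push_neg at hcon
        have : (-s) * (-s) ≤ (2*a) * (2*a) := mul_le_mul hcon hcon (by linarith) (by linarith)
        have e1 : (-s) * (-s) = s ^ 2 := by ring
        have e2 : (2*a) * (2*a) = 4 * a ^ 2 := by ring
        linarith
      have hq : s ^ 2 / 4 ≤ (a + s) ^ 2 := by
        have hx : a + s ≤ s/2 := by linarith
        have hy : s/2 ≤ 0 := by linarith
        have : -(s/2) * -(s/2) ≤ -(a+s) * -(a+s) := mul_le_mul (by linarith) (by linarith) (by linarith) (by linarith)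
        have e1 : -(s/2) * -(s/2) = s ^ 2 / 4 := by ring
        have e2 : -(a+s) * -(a+s) = (a+s) ^ 2 := by ring
        linarith
      calc cst β₁ * (a ^ 2 + b ^ 2 + s ^ 2) ≤ (1/8) * (a ^ 2 + b ^ 2 + s ^ 2) := by
            apply mul_le_mul_of_nonneg_right hc8 (by positivity)
        _ ≤ (a + s) ^ 2 + b ^ 2 := by nlinarith [sq_nonneg b]

section Part2
variable {β₁ κ : ℝ} (hβ : 0 < β₁) (hβ' : β₁ < Real.pi / 2) (hκ : 1 ≤ κ)

lemma abs_exp_Iks (k : ℤ) (s : ℝ) : ‖Complex.exp (Complex.I * k * s)‖ = 1 := by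
  rw [Complex.norm_exp]
  norm_num [Complex.mul_re, Complex.mul_im]

include hβ hβ' hκ in
lemma abs_lower {v : ℂ} (hv : v ∈ Din β₁ κ) {s : ℝ} (hs : s ≤ 0) :
    Real.sqrt (cst β₁) * Real.sqrt (‖v‖ ^ 2 + s ^ 2) ≤ ‖v + s‖ := by
  have h := key_ineq hβ hβ' hκ hv hs
  have := Real.sqrt_le_sqrt h
  rwa [Real.sqrt_mul (cst_pos hβ hβ').le, Real.sqrt_sq (norm_nonneg _)] at this

include hβ hβ' hκ in
lemma integrand_bound {v : ℂ} (hv : v ∈ Din β₁ κ) {s : ℝ} (hs : s ≤ 0) (n : ℕ) (hn : 2 ≤ n)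
    (k : ℤ) :
    ‖((v + (s:ℂ)) ^ n)⁻¹ * Complex.exp (Complex.I * k * s)‖ ≤
      (Real.sqrt (cst β₁) ^ n)⁻¹ * (‖v‖ ^ (n - 2))⁻¹ *
        (‖v‖ ^ 2 + s ^ 2)⁻¹ := by
  have hr : 0 < ‖v‖ := norm_pos_iff.mpr (Din_ne_zero hκ hv)
  have hd : 0 < Real.sqrt (cst β₁) := Real.sqrt_pos.2 (cst_pos hβ hβ')
  have hq : 0 < Real.sqrt (‖v‖ ^ 2 + s ^ 2) := Real.sqrt_pos.2 (by positivity)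
  have hsq : ‖v‖ ≤ Real.sqrt (‖v‖ ^ 2 + s ^ 2) := by
    rw [show ‖v‖ = Real.sqrt (‖v‖ ^ 2) from (Real.sqrt_sq hr.le).symm]
    exact Real.sqrt_le_sqrt (by nlinarith [sq_nonneg s, Real.sq_sqrt (by positivity : (0:ℝ) ≤ ‖v‖ ^2)])
  have hlow := abs_lower hβ hβ' hκ hv hs
  have hprod : Real.sqrt (cst β₁) ^ n * ‖v‖ ^ (n-2) * (‖v‖ ^2 + s^2)
      ≤ ‖v + s‖ ^ n := by
    rw [mul_assoc]
    have h1 : ‖v‖ ^ (n-2) * (‖v‖ ^2 + s^2)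
        ≤ Real.sqrt (‖v‖ ^2 + s^2) ^ n := by
      obtain ⟨m, rfl⟩ := Nat.exists_eq_add_of_le hn
      have e : Real.sqrt (‖v‖ ^2 + s^2) ^ (2+m)
          = Real.sqrt (‖v‖ ^2 + s^2) ^ m * (‖v‖ ^2 + s^2) := by
        rw [add_comm 2 m, pow_add, Real.sq_sqrt (by positivity)]
      rw [e, show 2 + m - 2 = m by omega]
      exact mul_le_mul_of_nonneg_right (pow_le_pow_left₀ hr.le hsq _) (by positivity)
    calc Real.sqrt (cst β₁) ^ n * (‖v‖ ^ (n-2) * (‖v‖ ^2 + s^2))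
        ≤ Real.sqrt (cst β₁) ^ n * Real.sqrt (‖v‖ ^2 + s^2) ^ n :=
          mul_le_mul_of_nonneg_left h1 (by positivity)
      _ = (Real.sqrt (cst β₁) * Real.sqrt (‖v‖ ^2 + s^2)) ^ n := (mul_pow _ _ _).symm
      _ ≤ ‖v + s‖ ^ n := pow_le_pow_left₀ (by positivity) hlow _
  rw [norm_mul]
  have : ‖Complex.exp (Complex.I * k * s)‖ = 1 := abs_exp_Iks k s
  rw [this, mul_one, norm_inv]
  rw [show ‖(v + (s:ℂ)) ^ n‖ = ‖v+s‖ ^ n by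
    rw [norm_pow]]
  rw [← mul_inv, ← mul_inv]
  exact inv_anti₀ (by positivity) (by linarith [hprod])

lemma integrable_inv_sq_add {r : ℝ} (hr : 0 < r) :
    Integrable (fun s : ℝ => (r ^ 2 + s ^ 2)⁻¹) := by
  have hm : 0 < min (r^2) 1 := lt_min (by positivity) one_pos
  apply Integrable.mono' (integrable_inv_one_add_sq.const_mul (min (r^2) 1)⁻¹)
  · exact (Continuous.inv₀ (by continuity) (fun s => by positivity)).aestronglyMeasurable
  · filter_upwards with s
    rw [Real.norm_eq_abs, abs_of_nonneg (by positivity)]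
    rw [← mul_inv]
    apply inv_anti₀ (by positivity)
    have h1 : min (r^2) 1 * 1 ≤ r^2 := by simpa using min_le_left (r^2) 1
    have h2 : min (r^2) 1 * s^2 ≤ s^2 := by
      nlinarith [min_le_right (r^2) 1, sq_nonneg s, hm.le]
    nlinarith

lemma integral_Iic_inv_sq_add {r : ℝ} (hr : 0 < r) :
    ∫ s in Iic (0:ℝ), (r ^ 2 + s ^ 2)⁻¹ = π / (2 * r) := by
  have hderiv : ∀ x ∈ Iic (0:ℝ), HasDerivAt (fun x => r⁻¹ * Real.arctan (x / r))
      ((r ^ 2 + x ^ 2)⁻¹) x := by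
    intro x _
    have h1 : HasDerivAt (fun x : ℝ => x / r) (1 / r) x := (hasDerivAt_id x).div_const r
    have h2 := (Real.hasDerivAt_arctan (x / r)).comp x h1
    have h3 := h2.const_mul r⁻¹
    refine h3.congr_deriv ?_
    field_simp
  have htend : Tendsto (fun x => r⁻¹ * Real.arctan (x / r)) atBot (𝓝 (r⁻¹ * (-(π/2)))) := by
    apply Tendsto.const_mul
    apply (Real.tendsto_arctan_atBot.mono_right nhdsWithin_le_nhds).comp
    exact Tendsto.atBot_div_const hr tendsto_id
  have := integral_Iic_of_hasDerivAt_of_tendsto' hderiv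
    ((integrable_inv_sq_add hr).integrableOn) htend
  rw [this, zero_div, Real.arctan_zero, mul_zero, zero_sub]
  rw [eq_div_iff (by positivity : (2:ℝ) * r ≠ 0)]
  field_simp
end Part2

noncomputable def gg (k : ℤ) (v : ℂ) (n : ℕ) (s : ℝ) : ℂ :=
  ((v + (s:ℂ)) ^ n)⁻¹ * Complex.exp (Complex.I * k * s)

section Part3
variable {β₁ κ : ℝ} (hβ : 0 < β₁) (hβ' : β₁ < Real.pi / 2) (hκ : 1 ≤ κ)

lemma gg_measurable (k : ℤ) (v : ℂ) (n : ℕ) : Measurable (gg k v n) := by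
  unfold gg
  apply Measurable.mul
  · exact (((Complex.measurable_ofReal).const_add v).pow_const n).inv
  · exact Complex.measurable_exp.comp ((Complex.measurable_ofReal).const_mul _)

include hβ hβ' hκ in
lemma gg_integrableOn {v : ℂ} (hv : v ∈ Din β₁ κ) (k : ℤ) {n : ℕ} (hn : 2 ≤ n) :
    IntegrableOn (gg k v n) (Iic 0) := by
  have hr : 0 < ‖v‖ := norm_pos_iff.mpr (Din_ne_zero hκ hv)
  apply Integrable.mono'
    (((integrable_inv_sq_add hr).const_mul
      ((Real.sqrt (cst β₁) ^ n)⁻¹ * (‖v‖ ^ (n - 2))⁻¹)).integrableOn)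
    ((gg_measurable k v n).aestronglyMeasurable)
  rw [ae_restrict_iff' measurableSet_Iic]
  filter_upwards with s hs
  have := integrand_bound hβ hβ' hκ hv hs n hn k
  calc ‖gg k v n s‖ ≤ _ := this
    _ = (Real.sqrt (cst β₁) ^ n)⁻¹ * (‖v‖ ^ (n - 2))⁻¹ *
        (‖v‖ ^ 2 + s ^ 2)⁻¹ := rfl

include hβ hβ' hκ in
lemma gg_abs_integral_le {v : ℂ} (hv : v ∈ Din β₁ κ) (k : ℤ) {n : ℕ} (hn : 2 ≤ n) :
    ‖∫ s in Iic (0:ℝ), gg k v n s‖ ≤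
      (Real.sqrt (cst β₁) ^ n)⁻¹ * (π/2) * (‖v‖ ^ (n - 1))⁻¹ := by
  have hr : 0 < ‖v‖ := norm_pos_iff.mpr (Din_ne_zero hκ hv)
  have h1 : ‖∫ s in Iic (0:ℝ), gg k v n s‖ ≤
      ∫ s in Iic (0:ℝ), (Real.sqrt (cst β₁) ^ n)⁻¹ * (‖v‖ ^ (n - 2))⁻¹ *
        (‖v‖ ^ 2 + s ^ 2)⁻¹ := by
    rw [show ‖∫ s in Iic (0:ℝ), gg k v n s‖
        = ‖∫ s in Iic (0:ℝ), gg k v n s‖ from rfl]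
    apply norm_integral_le_of_norm_le
    · exact (((integrable_inv_sq_add hr).const_mul _).integrableOn)
    · rw [ae_restrict_iff' measurableSet_Iic]
      filter_upwards with s hs
      exact integrand_bound hβ hβ' hκ hv hs n hn k
  have h2 : ∫ s in Iic (0:ℝ), (Real.sqrt (cst β₁) ^ n)⁻¹ * (‖v‖ ^ (n - 2))⁻¹ *
        (‖v‖ ^ 2 + s ^ 2)⁻¹
      = (Real.sqrt (cst β₁) ^ n)⁻¹ * (‖v‖ ^ (n - 2))⁻¹ * (π / (2 * ‖v‖)) := by
    rw [integral_const_mul, integral_Iic_inv_sq_add hr]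
  have h3 : (Real.sqrt (cst β₁) ^ n)⁻¹ * (‖v‖ ^ (n - 2))⁻¹ * (π / (2 * ‖v‖))
      = (Real.sqrt (cst β₁) ^ n)⁻¹ * (π/2) * (‖v‖ ^ (n - 1))⁻¹ := by
    rw [show n - 1 = (n - 2) + 1 by omega, pow_succ]
    field_simp
  rw [h2, h3] at h1
  exact h1

include hβ hβ' hκ in
lemma gg_tendsto_atBot {v : ℂ} (hv : v ∈ Din β₁ κ) (k : ℤ) {n : ℕ} (hn : 2 ≤ n) :
    Tendsto (gg k v n) atBot (𝓝 0) := by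
  have hr : 0 < ‖v‖ := norm_pos_iff.mpr (Din_ne_zero hκ hv)
  refine squeeze_zero_norm'
    (a := fun s => (Real.sqrt (cst β₁) ^ n)⁻¹ * (‖v‖ ^ (n - 2))⁻¹ *
      (‖v‖ ^ 2 + s ^ 2)⁻¹) ?_ ?_
  · filter_upwards [Iic_mem_atBot (0:ℝ)] with s hs
    exact integrand_bound hβ hβ' hκ hv hs n hn k
  · have h1 : Tendsto (fun s : ℝ => ‖v‖ ^ 2 + s ^ 2) atBot atTop := by
      apply tendsto_atTop_add_const_left
      have : Tendsto (fun s : ℝ => s * s) atBot atTop :=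
        Filter.Tendsto.atBot_mul_atBot₀ tendsto_id tendsto_id
      exact this.congr (fun s => (sq s).symm)
    have h2 := h1.inv_tendsto_atTop
    have := h2.const_mul ((Real.sqrt (cst β₁) ^ n)⁻¹ * (‖v‖ ^ (n - 2))⁻¹)
    simpa using this

include hβ hβ' hκ in
lemma ibp {v : ℂ} (hv : v ∈ Din β₁ κ) (k : ℤ) {n : ℕ} (hn : 2 ≤ n) :
    Complex.I * k * ∫ s in Iic (0:ℝ), gg k v n s
      = (v ^ n)⁻¹ + n * ∫ s in Iic (0:ℝ), gg k v (n+1) s := by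
  have hr : 0 < ‖v‖ := norm_pos_iff.mpr (Din_ne_zero hκ hv)
  have hne : ∀ s : ℝ, s ≤ 0 → v + (s:ℂ) ≠ 0 := by
    intro s hs h0
    have := key_ineq hβ hβ' hκ hv hs
    rw [h0] at this
    simp only [norm_zero] at this
    nlinarith [cst_pos hβ hβ', sq_nonneg s, mul_pos (cst_pos hβ hβ') (pow_pos hr 2)]
  set f' : ℝ → ℂ := fun s => Complex.I * k * gg k v n s + (-(n:ℂ)) * gg k v (n+1) s with hf'
  have hderiv : ∀ x ∈ Iic (0:ℝ), HasDerivAt (gg k v n) (f' x) x := by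
    intro x hx
    have hnex : v + (x:ℂ) ≠ 0 := hne x hx
    have h1 : HasDerivAt (fun z : ℂ => v + z) 1 (x:ℂ) := by
      simpa using (hasDerivAt_id (x:ℂ)).const_add v
    have h2 : HasDerivAt (fun z : ℂ => (v + z) ^ n) ((n : ℂ) * (v + x) ^ (n-1) * 1) (x:ℂ) :=
      (hasDerivAt_pow n (v + (x:ℂ))).comp (x:ℂ) h1
    have h3 := h2.inv (pow_ne_zero n hnex)
    have h4 : HasDerivAt (fun z : ℂ => Complex.exp (Complex.I * k * z))
        (Complex.exp (Complex.I * k * x) * (Complex.I * k * 1)) (x:ℂ) :=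
      ((hasDerivAt_id (x:ℂ)).const_mul (Complex.I * k)).cexp
    have h5 := h3.mul h4
    have h6 := h5.comp_ofReal
    refine h6.congr_deriv ?_
    have e1 : ((v + (x:ℂ)) ^ n) ^ 2 = (v + x) ^ (n+1) * (v + x) ^ (n-1) := by
      rw [← pow_mul, ← pow_add]
      congr 1
      omega
    have key : -((n : ℂ) * (v + x) ^ (n-1) * 1) / ((v + (x:ℂ)) ^ n) ^ 2
        = -(n:ℂ) * ((v + x) ^ (n+1))⁻¹ := by
      rw [div_eq_iff (pow_ne_zero 2 (pow_ne_zero n hnex)), e1]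
      field_simp
    rw [hf']
    simp only [gg]
    rw [key]
    simp only [Pi.inv_apply]
    ring
  have hint : IntegrableOn f' (Iic 0) := by
    apply Integrable.add
    · exact (gg_integrableOn hβ hβ' hκ hv k hn).const_mul _
    · exact (gg_integrableOn hβ hβ' hκ hv k (by omega : 2 ≤ n+1)).const_mul _
  have := integral_Iic_of_hasDerivAt_of_tendsto' hderiv hint
    (gg_tendsto_atBot hβ hβ' hκ hv k hn)
  rw [show gg k v n 0 = (v ^ n)⁻¹ by simp [gg], sub_zero] at this
  rw [hf'] at this
  rw [MeasureTheory.integral_add ((gg_integrableOn hβ hβ' hκ hv k hn).const_mul _)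
    ((gg_integrableOn hβ hβ' hκ hv k (by omega : 2 ≤ n+1)).const_mul _),
    integral_const_mul, integral_const_mul] at this
  have := this
  linear_combination this
end Part3

section Part4
variable {β₁ κ : ℝ} (hβ : 0 < β₁) (hβ' : β₁ < Real.pi / 2) (hκ : 1 ≤ κ)

lemma isOpen_Din : IsOpen (Din β₁ κ) := by
  apply IsOpen.union
  · exact isOpen_lt Complex.continuous_im (by continuity)
  · exact isOpen_lt (by continuity) Complex.continuous_im

include hβ hβ' hκ in
lemma hasDerivAt_J2 {v : ℂ} (hv : v ∈ Din β₁ κ) (k : ℤ) :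
    HasDerivAt (fun x : ℂ => ∫ s in Iic (0:ℝ), gg k x 2 s)
      ((-2 : ℂ) * ∫ s in Iic (0:ℝ), gg k v 3 s) v := by
  have hr : 0 < ‖v‖ := norm_pos_iff.mpr (Din_ne_zero hκ hv)
  obtain ⟨ε₀, hε₀, hball⟩ := Metric.isOpen_iff.1 (isOpen_Din (β₁ := β₁) (κ := κ)) v hv
  set ε := min ε₀ (‖v‖ / 2) with hε
  have hεpos : 0 < ε := lt_min hε₀ (by positivity)
  have hsub : Metric.ball v ε ⊆ Din β₁ κ :=
    (Metric.ball_subset_ball (min_le_left _ _)).trans hball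
  have hxabs : ∀ x ∈ Metric.ball v ε, ‖v‖ / 2 ≤ ‖x‖ := by
    intro x hx
    have h1 : dist x v < ε := Metric.mem_ball.1 hx
    have h2 : ‖v‖ - ‖x - v‖ ≤ ‖x‖ := by
      have := norm_sub_norm_le v x
      have e : ‖v - x‖ = ‖x - v‖ := norm_sub_rev v x
      linarith [norm_sub_norm_le v x, e ▸ (le_refl ‖v - x‖)]
    have h3 : ‖x - v‖ < ε := by rwa [← dist_eq_norm]
    have h4 : ε ≤ ‖v‖ / 2 := min_le_right _ _
    linarith
  set bnd : ℝ → ℝ := fun s => 2 * ((Real.sqrt (cst β₁) ^ 3)⁻¹ * (‖v‖ / 2)⁻¹ *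
    ((‖v‖ / 2) ^ 2 + s ^ 2)⁻¹) with hbnd
  have key := hasDerivAt_integral_of_dominated_loc_of_deriv_le (μ := volume.restrict (Iic 0))
    (F := fun x s => gg k x 2 s) (F' := fun x s => (-2 : ℂ) * gg k x 3 s)
    (x₀ := v) (bound := bnd) (Metric.ball_mem_nhds v hεpos)
    (Eventually.of_forall fun x => (gg_measurable k x 2).aestronglyMeasurable)
    (gg_integrableOn hβ hβ' hκ hv k (le_refl 2))
    ((gg_measurable k v 3).aestronglyMeasurable.const_mul _)
    ?_ ?_ ?_
  · rcases key with ⟨_, hd⟩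
    rwa [integral_const_mul] at hd
  · -- h_bound
    rw [ae_restrict_iff' measurableSet_Iic]
    filter_upwards with s hs
    intro x hx
    have hxD : x ∈ Din β₁ κ := hsub hx
    have hb := integrand_bound hβ hβ' hκ hxD hs 3 (by norm_num) k
    have hrx : ‖v‖ / 2 ≤ ‖x‖ := hxabs x hx
    have hrx0 : 0 < ‖x‖ := lt_of_lt_of_le (by positivity) hrx
    rw [norm_mul]
    have : ‖(-2 : ℂ)‖ = 2 := by norm_num
    rw [this]
    rw [hbnd]
    have h31 : (‖x‖ ^ (3 - 2))⁻¹ ≤ (‖v‖ / 2)⁻¹ := by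
      rw [show (3:ℕ) - 2 = 1 by norm_num, pow_one]
      exact inv_anti₀ (by positivity) hrx
    have h32 : (‖x‖ ^ 2 + s ^ 2)⁻¹ ≤ ((‖v‖ / 2) ^ 2 + s ^ 2)⁻¹ := by
      apply inv_anti₀ (by positivity)
      have : (‖v‖ / 2) ^ 2 ≤ ‖x‖ ^ 2 := by nlinarith
      linarith
    have hchain : ‖gg k x 3 s‖ ≤ (Real.sqrt (cst β₁) ^ 3)⁻¹ * (‖v‖ / 2)⁻¹ *
        ((‖v‖ / 2) ^ 2 + s ^ 2)⁻¹ := by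
      calc ‖gg k x 3 s‖ ≤ (Real.sqrt (cst β₁) ^ 3)⁻¹ * (‖x‖ ^ (3 - 2))⁻¹ *
          (‖x‖ ^ 2 + s ^ 2)⁻¹ := hb
        _ ≤ (Real.sqrt (cst β₁) ^ 3)⁻¹ * (‖v‖ / 2)⁻¹ *
            ((‖v‖ / 2) ^ 2 + s ^ 2)⁻¹ := by
          apply mul_le_mul
          · exact mul_le_mul_of_nonneg_left h31 (by positivity)
          · exact h32
          · positivity
          · positivity
    linarith [hchain]
  · -- bound integrable
    exact ((integrable_inv_sq_add (by positivity : 0 < ‖v‖ / 2)).const_mul _).restrict.const_mul 2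
  · -- h_diff
    rw [ae_restrict_iff' measurableSet_Iic]
    filter_upwards with s hs
    intro x hx
    have hxD : x ∈ Din β₁ κ := hsub hx
    have hne : x + (s:ℂ) ≠ 0 := by
      intro h0
      have := key_ineq hβ hβ' hκ hxD hs
      rw [h0] at this
      simp only [norm_zero] at this
      have hrx : (0:ℝ) < ‖x‖ := norm_pos_iff.mpr (Din_ne_zero hκ hxD)
      nlinarith [cst_pos hβ hβ', sq_nonneg s, pow_pos hrx 2]
    have h1 : HasDerivAt (fun x : ℂ => x + (s:ℂ)) 1 x := (hasDerivAt_id x).add_const _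
    have h2 : HasDerivAt (fun x : ℂ => (x + (s:ℂ)) ^ 2) ((2 : ℂ) * (x + s) ^ (2-1) * 1) x :=
      by have := (hasDerivAt_pow 2 (x + (s:ℂ))).comp x h1; exact_mod_cast this
    have h3 := (h2.inv (pow_ne_zero 2 hne)).mul_const (Complex.exp (Complex.I * k * s))
    refine h3.congr_deriv ?_
    have e1 : ((x + (s:ℂ)) ^ 2) ^ 2 = (x + s) ^ 3 * (x + s) := by ring
    have keyv : -((2:ℂ) * (x + s) ^ (2-1) * 1) / ((x + (s:ℂ)) ^ 2) ^ 2
        = (-2 : ℂ) * ((x + s) ^ 3)⁻¹ := by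
      rw [div_eq_iff (pow_ne_zero 2 (pow_ne_zero 2 hne)), e1]
      field_simp
      ring
    simp only [gg]
    rw [keyv]
    ring
end Part4

/-- If `V^[0] = 0` and `|V^[k]| ≤ K₀ e^{-|k|σ₀}`, then `L⁺_in` and `∂_θ L⁺_in`
belong to `Y₂` and `∂_v L⁺_in ∈ Y₃` on the inner domain `D⁺_{κ,in}`, with norms
(for `0 < σ < σ₀`) bounded by a constant `K` independent of `κ ≥ 1`. -/
theorem stmt_12 (β₁ σ₀ σ K₀ : ℝ) (hβ : 0 < β₁) (hβ' : β₁ < Real.pi / 2)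
    (hσ : 0 < σ) (hσσ₀ : σ < σ₀) (hK₀ : 0 < K₀) :
    ∃ K > 0, ∀ κ : ℝ, 1 ≤ κ → ∀ Vk : ℤ → ℂ, Vk 0 = 0 →
      (∀ k : ℤ, ‖Vk k‖ ≤ K₀ * Real.exp (-(|k| : ℝ) * σ₀)) →
      (∀ k : ℤ, ∀ v ∈ Din β₁ κ,
        IntegrableOn
          (fun s : ℝ => ((v + (s : ℂ)) ^ 2)⁻¹ * Complex.exp (Complex.I * k * s))
          (Set.Iic 0)) ∧
      ∃ M : ℤ → ℝ,
        (∀ k : ℤ, ∀ v ∈ Din β₁ κ,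
          ‖v‖ ^ 2 * ‖Lin Vk k v‖ ≤ M k ∧
          ‖v‖ ^ 2 * ‖Complex.I * k * Lin Vk k v‖ ≤ M k ∧
          ‖v‖ ^ 3 * ‖deriv (Lin Vk k) v‖ ≤ M k) ∧
        (Summable fun k : ℤ => M k * Real.exp ((|k| : ℝ) * σ)) ∧
        ∑' k : ℤ, M k * Real.exp ((|k| : ℝ) * σ) ≤ K := by
  classical
  set d : ℝ := Real.sqrt (cst β₁) with hd
  set C3 : ℝ := (d ^ 3)⁻¹ * (π/2) with hC3
  set C4 : ℝ := (d ^ 4)⁻¹ * (π/2) with hC4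
  have hC3n : 0 ≤ C3 := by positivity
  have hC4n : 0 ≤ C4 := by positivity
  set Cm : ℝ := (1 + 2*C3)/8 + (1 + 3*C4)/4 with hCm
  have hCmpos : 0 < Cm := by positivity
  set a : ℝ := σ₀ - σ with ha
  have hapos : 0 < a := by simp [ha]; linarith
  set h : ℤ → ℝ := fun k => K₀ * Cm * Real.exp (-a * (|k| : ℝ)) with hh
  have hsumh : Summable h := by
    apply Summable.mul_left
    apply Summable.of_nat_of_neg (f := fun k : ℤ => Real.exp (-a * (|k| : ℝ)))
    · apply Summable.congr (f := fun n : ℕ => Real.exp (-a) ^ n)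
      · exact summable_geometric_of_lt_one (Real.exp_nonneg _) (Real.exp_lt_one_iff.2 (by linarith))
      · intro n
        rw [← Real.exp_nat_mul]
        congr 1
        simp [mul_comm]
    · apply Summable.congr (f := fun n : ℕ => Real.exp (-a) ^ n)
      · exact summable_geometric_of_lt_one (Real.exp_nonneg _) (Real.exp_lt_one_iff.2 (by linarith))
      · intro n
        rw [← Real.exp_nat_mul]
        congr 1
        simp [mul_comm]
  have htsum_nonneg : 0 ≤ ∑' k : ℤ, h k :=
    tsum_nonneg (fun k => by rw [hh]; positivity)
  refine ⟨(∑' k : ℤ, h k) + 1, by linarith, ?_⟩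
  intro κ hκ Vk hV0 hVbd
  set M : ℤ → ℝ := fun k => ‖Vk k‖ * Cm with hM
  constructor
  · intro k v hv
    exact gg_integrableOn hβ hβ' hκ hv k (le_refl 2)
  refine ⟨M, ?_, ?_, ?_⟩
  · -- main bounds
    intro k v hv
    have hr : 0 < ‖v‖ := norm_pos_iff.mpr (Din_ne_zero hκ hv)
    have hMk : 0 ≤ M k := by rw [hM]; positivity
    by_cases hk : k = 0
    · subst hk
      have hz : Lin Vk 0 = fun _ : ℂ => (0:ℂ) := by
        funext x
        simp [Lin, hV0]
      rw [hz]
      simp [hMk]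
    · -- k ≠ 0
      set J2 : ℂ := ∫ s in Iic (0:ℝ), gg k v 2 s with hJ2
      set J3 : ℂ := ∫ s in Iic (0:ℝ), gg k v 3 s with hJ3
      set J4 : ℂ := ∫ s in Iic (0:ℝ), gg k v 4 s with hJ4
      have habsk : (1:ℝ) ≤ |(k:ℝ)| := by
        rw [← Int.cast_abs]
        exact_mod_cast Int.one_le_abs hk
      have hIk : ∀ z : ℂ, ‖Complex.I * k * z‖ = |(k:ℝ)| * ‖z‖ := by
        intro z
        rw [norm_mul, norm_mul, Complex.norm_I, Complex.norm_intCast, one_mul]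
      -- bound on I k J2
      have hJ3bd : ‖J3‖ ≤ C3 * (‖v‖ ^ 2)⁻¹ := by
        have := gg_abs_integral_le hβ hβ' hκ hv k (by norm_num : 2 ≤ 3)
        simpa [hC3, hd, mul_assoc] using this
      have hJ4bd : ‖J4‖ ≤ C4 * (‖v‖ ^ 3)⁻¹ := by
        have := gg_abs_integral_le hβ hβ' hκ hv k (by norm_num : 2 ≤ 4)
        simpa [hC4, hd, mul_assoc] using this
      have hibp2 : Complex.I * k * J2 = (v ^ 2)⁻¹ + 2 * J3 :=
        ibp hβ hβ' hκ hv k (le_refl 2)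
      have hibp3 : Complex.I * k * J3 = (v ^ 3)⁻¹ + 3 * J4 := by
        have := ibp hβ hβ' hκ hv k (by norm_num : 2 ≤ 3)
        simpa using this
      have habsinv : ∀ n : ℕ, ‖(v ^ n)⁻¹‖ = (‖v‖ ^ n)⁻¹ := by
        intro n
        rw [norm_inv, norm_pow]
      have hIkJ2 : ‖Complex.I * k * J2‖ ≤ (1 + 2*C3) * (‖v‖ ^ 2)⁻¹ := by
        rw [hibp2]
        calc ‖(v ^ 2)⁻¹ + 2 * J3‖
            ≤ ‖(v ^ 2)⁻¹‖ + ‖2 * J3‖ := norm_add_le _ _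
          _ = (‖v‖ ^ 2)⁻¹ + 2 * ‖J3‖ := by
              rw [habsinv, norm_mul]
              norm_num
          _ ≤ (‖v‖ ^ 2)⁻¹ + 2 * (C3 * (‖v‖ ^ 2)⁻¹) := by
              have := hJ3bd
              nlinarith
          _ = (1 + 2*C3) * (‖v‖ ^ 2)⁻¹ := by ring
      have hIkJ3 : ‖Complex.I * k * J3‖ ≤ (1 + 3*C4) * (‖v‖ ^ 3)⁻¹ := by
        rw [hibp3]
        calc ‖(v ^ 3)⁻¹ + 3 * J4‖
            ≤ ‖(v ^ 3)⁻¹‖ + ‖3 * J4‖ := norm_add_le _ _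
          _ = (‖v‖ ^ 3)⁻¹ + 3 * ‖J4‖ := by
              rw [habsinv, norm_mul]
              norm_num
          _ ≤ (‖v‖ ^ 3)⁻¹ + 3 * (C4 * (‖v‖ ^ 3)⁻¹) := by
              have := hJ4bd
              nlinarith
          _ = (1 + 3*C4) * (‖v‖ ^ 3)⁻¹ := by ring
      have hJ2bd : ‖J2‖ ≤ (1 + 2*C3) * (‖v‖ ^ 2)⁻¹ := by
        have h1 : ‖J2‖ ≤ ‖Complex.I * k * J2‖ := by
          rw [hIk]
          exact le_mul_of_one_le_left (norm_nonneg _) habsk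
        linarith
      have hJ3bd' : ‖J3‖ ≤ (1 + 3*C4) * (‖v‖ ^ 3)⁻¹ := by
        have h1 : ‖J3‖ ≤ ‖Complex.I * k * J3‖ := by
          rw [hIk]
          exact le_mul_of_one_le_left (norm_nonneg _) habsk
        linarith
      have hLinJ : Lin Vk k v = (Vk k / 8) * J2 := rfl
      have habsVk8 : ‖Vk k / 8‖ = ‖Vk k‖ / 8 := by
        rw [norm_div]
        norm_num
      have hcancel2 : ‖v‖ ^ 2 * (‖v‖ ^ 2)⁻¹ = 1 :=
        mul_inv_cancel₀ (by positivity)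
      have hcancel3 : ‖v‖ ^ 3 * (‖v‖ ^ 3)⁻¹ = 1 :=
        mul_inv_cancel₀ (by positivity)
      refine ⟨?_, ?_, ?_⟩
      · -- first bound
        rw [hLinJ, norm_mul, habsVk8]
        calc ‖v‖ ^ 2 * (‖Vk k‖ / 8 * ‖J2‖)
            ≤ ‖v‖ ^ 2 * (‖Vk k‖ / 8 * ((1 + 2*C3) * (‖v‖ ^ 2)⁻¹)) := by
              apply mul_le_mul_of_nonneg_left _ (by positivity)
              apply mul_le_mul_of_nonneg_left hJ2bd (by positivity)
          _ = ‖Vk k‖ * ((1 + 2*C3)/8) * (‖v‖ ^ 2 * (‖v‖ ^ 2)⁻¹) := by ring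
          _ = ‖Vk k‖ * ((1 + 2*C3)/8) := by rw [hcancel2, mul_one]
          _ ≤ M k := by
              rw [hM]
              apply mul_le_mul_of_nonneg_left _ (norm_nonneg _)
              rw [hCm]
              linarith
      · -- second bound
        have he : Complex.I * k * Lin Vk k v = (Vk k / 8) * (Complex.I * k * J2) := by
          rw [hLinJ]; ring
        rw [he, norm_mul, habsVk8]
        calc ‖v‖ ^ 2 * (‖Vk k‖ / 8 * ‖Complex.I * k * J2‖)
            ≤ ‖v‖ ^ 2 * (‖Vk k‖ / 8 * ((1 + 2*C3) * (‖v‖ ^ 2)⁻¹)) := by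
              apply mul_le_mul_of_nonneg_left _ (by positivity)
              apply mul_le_mul_of_nonneg_left hIkJ2 (by positivity)
          _ = ‖Vk k‖ * ((1 + 2*C3)/8) * (‖v‖ ^ 2 * (‖v‖ ^ 2)⁻¹) := by ring
          _ = ‖Vk k‖ * ((1 + 2*C3)/8) := by rw [hcancel2, mul_one]
          _ ≤ M k := by
              rw [hM]
              apply mul_le_mul_of_nonneg_left _ (norm_nonneg _)
              rw [hCm]
              linarith
      · -- third bound
        have hder : HasDerivAt (Lin Vk k) ((Vk k / 8) * ((-2 : ℂ) * J3)) v := by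
          have h0 := (hasDerivAt_J2 hβ hβ' hκ hv k).const_mul (Vk k / 8)
          exact h0
        rw [hder.deriv, norm_mul, habsVk8, norm_mul]
        have habs2 : ‖(-2 : ℂ)‖ = 2 := by norm_num
        rw [habs2]
        calc ‖v‖ ^ 3 * (‖Vk k‖ / 8 * (2 * ‖J3‖))
            ≤ ‖v‖ ^ 3 * (‖Vk k‖ / 8 * (2 * ((1 + 3*C4) * (‖v‖ ^ 3)⁻¹))) := by
              apply mul_le_mul_of_nonneg_left _ (by positivity)
              apply mul_le_mul_of_nonneg_left _ (by positivity)
              apply mul_le_mul_of_nonneg_left hJ3bd' (by norm_num)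
          _ = ‖Vk k‖ * ((1 + 3*C4)/4) * (‖v‖ ^ 3 * (‖v‖ ^ 3)⁻¹) := by ring
          _ = ‖Vk k‖ * ((1 + 3*C4)/4) := by rw [hcancel3, mul_one]
          _ ≤ M k := by
              rw [hM]
              apply mul_le_mul_of_nonneg_left _ (norm_nonneg _)
              rw [hCm]
              linarith
  · -- summability
    apply Summable.of_nonneg_of_le (fun k => by rw [hM]; positivity) _ hsumh
    intro k
    rw [hM, hh]
    calc ‖Vk k‖ * Cm * Real.exp ((|k| : ℝ) * σ)
        ≤ K₀ * Real.exp (-(|k| : ℝ) * σ₀) * Cm * Real.exp ((|k| : ℝ) * σ) := by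
          apply mul_le_mul_of_nonneg_right _ (Real.exp_nonneg _)
          exact mul_le_mul_of_nonneg_right (hVbd k) hCmpos.le
      _ = K₀ * Cm * Real.exp (-a * (|k| : ℝ)) := by
          have e : Real.exp (-(|k| : ℝ) * σ₀) * Real.exp ((|k| : ℝ) * σ)
              = Real.exp (-a * (|k| : ℝ)) := by
            rw [← Real.exp_add]
            congr 1
            rw [ha]
            ring
          rw [← e]
          ring
  · -- tsum bound
    have hle : ∀ k : ℤ, M k * Real.exp ((|k| : ℝ) * σ) ≤ h k := by
      intro k
      rw [hM, hh]
      calc ‖Vk k‖ * Cm * Real.exp ((|k| : ℝ) * σ)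
          ≤ K₀ * Real.exp (-(|k| : ℝ) * σ₀) * Cm * Real.exp ((|k| : ℝ) * σ) := by
            apply mul_le_mul_of_nonneg_right _ (Real.exp_nonneg _)
            exact mul_le_mul_of_nonneg_right (hVbd k) hCmpos.le
        _ = K₀ * Cm * Real.exp (-a * (|k| : ℝ)) := by
            have e : Real.exp (-(|k| : ℝ) * σ₀) * Real.exp ((|k| : ℝ) * σ)
                = Real.exp (-a * (|k| : ℝ)) := by
              rw [← Real.exp_add]
              congr 1
              rw [ha]
              ring
            rw [← e]
            ring
    have hsumf : Summable (fun k : ℤ => M k * Real.exp ((|k| : ℝ) * σ)) := by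
      apply Summable.of_nonneg_of_le (fun k => by rw [hM]; positivity) hle hsumh
    calc ∑' k : ℤ, M k * Real.exp ((|k| : ℝ) * σ) ≤ ∑' k : ℤ, h k :=
          Summable.tsum_le_tsum hle hsumf hsumh
      _ ≤ (∑' k : ℤ, h k) + 1 := by linarith
end

section
/- For Im v < 0, the inner Melnikov potential L_in(v,θ) = -∫_{-∞}^{∞} (-V(θ+s-v)/(8s²)) ds, where the integral is along a horizontal line with Im s < 0, equals -Σ_{k≥1} (π k V^[k]/4) e^{ik(θ-v)}. In particular, ∫_{Im s = c} s^{-2} e^{iks} ds = -2πk for k ≥ 1 and = 0 for k ≤ -1, where c < 0. -/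
open MeasureTheory Set Filter
open scoped FourierTransform Topology Real

lemma melnikov_integrableOn {a : ℂ} (ha : a.re < 0) :
    IntegrableOn (fun u : ℝ => (u : ℂ) * Complex.exp (a * u)) (Set.Ioi 0) := by
  have hb0 : (0:ℝ) < -a.re := by linarith
  have hreal : IntegrableOn (fun u : ℝ => u * Real.exp (-(-a.re) * u)) (Set.Ioi 0) := by
    have := integrableOn_rpow_mul_exp_neg_mul_rpow (by norm_num : (-1:ℝ) < 1) (by norm_num : (0:ℝ) < 1) hb0
    simpa [Real.rpow_one] using this
  refine Integrable.mono' hreal ?_ ?_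
  · exact (Continuous.aestronglyMeasurable (by fun_prop)).restrict
  · filter_upwards [ae_restrict_mem measurableSet_Ioi] with u hu
    have h1 : ‖(u:ℂ) * Complex.exp (a * u)‖ = |u| * Real.exp (a.re * u) := by
      simp [Complex.norm_exp]
    rw [h1, abs_of_pos hu]
    simp

lemma melnikov_integral {a : ℂ} (ha : a.re < 0) :
    ∫ u in Set.Ioi (0:ℝ), (u : ℂ) * Complex.exp (a * u) = 1 / a ^ 2 := by
  have ha0 : a ≠ 0 := fun h => by simp [h] at ha
  have hb0 : (0:ℝ) < -a.re := by linarith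
  set F : ℝ → ℂ := fun u => Complex.exp (a * u) * (u / a - 1 / a ^ 2) with hF
  have hderiv : ∀ x : ℝ, x ∈ Set.Ici (0:ℝ) →
      HasDerivAt F ((x:ℂ) * Complex.exp (a * x)) x := by
    intro x _
    have he : HasDerivAt (fun z : ℂ => Complex.exp (a * z))
        (Complex.exp (a * (x:ℂ)) * a) (x:ℂ) := by
      simpa [mul_comm] using ((hasDerivAt_id (x:ℂ)).const_mul a).cexp
    have hg : HasDerivAt (fun z : ℂ => z / a - 1 / a ^ 2) (1 / a) (x:ℂ) :=
      ((hasDerivAt_id (x:ℂ)).div_const a).sub_const (1 / a ^ 2)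
    have h1 := (he.mul hg).comp_ofReal
    convert h1 using 1
    · rfl
    field_simp
    ring
  have t1 : Tendsto (fun u : ℝ => u * Real.exp (a.re * u)) atTop (𝓝 0) := by
    have h := ((Real.tendsto_pow_mul_exp_neg_atTop_nhds_zero 1).comp
      (tendsto_id.const_mul_atTop hb0)).const_mul (-a.re)⁻¹
    rw [mul_zero] at h
    refine h.congr fun u => ?_
    simp only [Function.comp, pow_one, id]
    rw [show -(-a.re * u) = a.re * u by ring]
    have hne : a.re ≠ 0 := ne_of_lt ha
    field_simp
  have t2 : Tendsto (fun u : ℝ => Real.exp (a.re * u)) atTop (𝓝 0) := by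
    have h := Real.tendsto_exp_neg_atTop_nhds_zero.comp (tendsto_id.const_mul_atTop hb0)
    refine h.congr fun u => ?_
    simp only [Function.comp, id]
    rw [show -(-a.re * u) = a.re * u by ring]
  have htend : Tendsto F atTop (𝓝 0) := by
    have hsum := (t1.mul_const ‖(1:ℂ)/a‖).add (t2.mul_const ‖(1:ℂ)/a^2‖)
    rw [zero_mul, zero_mul, add_zero] at hsum
    apply squeeze_zero_norm' _ hsum
    filter_upwards [eventually_ge_atTop (0:ℝ)] with u hu
    have hFu : F u = Complex.exp (a*u) * ((u:ℂ)/a) - Complex.exp (a*u) * (1/a^2) := by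
      rw [hF]; ring
    rw [hFu]
    refine (norm_sub_le _ _).trans (le_of_eq ?_)
    have e1 : ‖Complex.exp (a*(u:ℂ))‖ = Real.exp (a.re * u) := by
      simp [Complex.norm_exp]
    rw [norm_mul, norm_mul, e1]
    rw [show (u:ℂ)/a = (u:ℂ) * ((1:ℂ)/a) by ring, norm_mul]
    simp only [Complex.norm_real, Real.norm_eq_abs, abs_of_nonneg hu]
    ring
  have := integral_Ioi_of_hasDerivAt_of_tendsto' hderiv (melnikov_integrableOn ha) htend
  rw [this, hF]
  simp

noncomputable def melF (c : ℝ) : ℝ → ℂ :=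
  fun u => -((max u 0 : ℝ) : ℂ) * Complex.exp ((c:ℂ) * u)

lemma melF_cont (c : ℝ) : Continuous (melF c) := by
  unfold melF
  fun_prop

lemma melF_integrable (c : ℝ) (hc : c < 0) : Integrable (melF c) := by
  have h : melF c = Set.indicator (Set.Ioi 0)
      (fun u : ℝ => -((u:ℂ) * Complex.exp ((c:ℂ) * u))) := by
    funext u
    by_cases hu : 0 < u
    · rw [Set.indicator_of_mem (Set.mem_Ioi.mpr hu)]
      unfold melF
      rw [max_eq_left hu.le]; ring
    · rw [Set.indicator_of_notMem (by simpa using hu)]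
      unfold melF
      rw [max_eq_right (not_lt.1 hu)]
      simp
  rw [h, integrable_indicator_iff measurableSet_Ioi]
  exact (melnikov_integrableOn (by simpa using hc)).neg

lemma melF_fourier (c : ℝ) (hc : c < 0) (ξ : ℝ) :
    𝓕 (melF c) ξ = ((((2 * π * ξ : ℝ) : ℂ) + (c:ℂ) * Complex.I) ^ 2)⁻¹ := by
  set a : ℂ := (c:ℂ) + ((-(2 * π * ξ) : ℝ) : ℂ) * Complex.I with ha_def
  have ha : a.re < 0 := by simpa [ha_def] using hc
  rw [Real.fourier_real_eq_integral_exp_smul]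
  have h1 : (∫ v : ℝ, Complex.exp (((-2 * π * v * ξ : ℝ) : ℂ) * Complex.I) • melF c v)
      = ∫ v in Set.Ioi (0:ℝ), -((v:ℂ) * Complex.exp (a * v)) := by
    rw [← integral_indicator measurableSet_Ioi]
    congr 1
    funext v
    by_cases hv : 0 < v
    · rw [Set.indicator_of_mem (Set.mem_Ioi.mpr hv)]
      unfold melF
      rw [max_eq_left hv.le, smul_eq_mul]
      rw [show a * v = ((-2 * π * v * ξ : ℝ) : ℂ) * Complex.I + (c:ℂ) * v by
        rw [ha_def]; push_cast; ring]
      rw [Complex.exp_add]; ring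
    · rw [Set.indicator_of_notMem (by simpa using hv)]
      unfold melF
      rw [max_eq_right (not_lt.1 hv)]
      simp
  rw [h1, integral_neg, melnikov_integral ha]
  have key : ((((2 * π * ξ : ℝ) : ℂ) + (c:ℂ) * Complex.I)) ^ 2 = -(a ^ 2) := by
    rw [ha_def]; push_cast
    linear_combination ((c:ℂ)^2 + ((2:ℂ) * π * ξ)^2) * Complex.I_sq
  rw [key, inv_neg, one_div]

lemma melF_fourier_integrable (c : ℝ) (hc : c < 0) : Integrable (𝓕 (melF c)) := by
  have hz : ∀ ξ : ℝ, (((2 * π * ξ : ℝ) : ℂ) + (c:ℂ) * Complex.I) ≠ 0 := by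
    intro ξ h
    have := congrArg Complex.im h
    simp at this
    exact hc.ne this
  have heq : 𝓕 (melF c) = fun ξ : ℝ =>
      ((((2 * π * ξ : ℝ) : ℂ) + (c:ℂ) * Complex.I) ^ 2)⁻¹ := funext (melF_fourier c hc)
  rw [heq]
  set m : ℝ := min (c^2) (4 * π^2) with hm_def
  have hm : 0 < m := lt_min (by nlinarith) (by positivity)
  refine Integrable.mono' ((integrable_inv_one_add_sq).const_mul m⁻¹) ?_ ?_
  · apply Continuous.aestronglyMeasurable
    apply Continuous.inv₀
    · fun_prop
    · exact fun ξ => pow_ne_zero 2 (hz ξ)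
  · filter_upwards with ξ
    have hnorm : ‖((((2 * π * ξ : ℝ) : ℂ) + (c:ℂ) * Complex.I) ^ 2)⁻¹‖
        = ((2 * π * ξ)^2 + c^2)⁻¹ := by
      rw [norm_inv, norm_pow]
      congr 1
      rw [Complex.sq_norm, Complex.normSq_apply]
      simp
      ring
    rw [hnorm]
    rw [← mul_inv]
    apply inv_anti₀
    · positivity
    · have h1 : m ≤ c^2 := min_le_left _ _
      have h2 : m ≤ 4 * π^2 := min_le_right _ _
      nlinarith [sq_nonneg ξ, sq_nonneg (2 * π * ξ)]

lemma melnikov_G (c : ℝ) (hc : c < 0) (k : ℝ) :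
    (∫ t : ℝ, (((t:ℂ) + (c:ℂ) * Complex.I) ^ 2)⁻¹ * Complex.exp (Complex.I * k * t))
      = ((2 * π : ℝ) : ℂ) * melF c k := by
  have hinv := (melF_cont c).fourierInv_fourier_eq (melF_integrable c hc)
    (melF_fourier_integrable c hc)
  have h2 := congrFun hinv k
  rw [Real.fourierInv_eq_fourier_neg,
    Real.fourier_real_eq_integral_exp_smul] at h2
  set g0 : ℝ → ℂ :=
    fun t => (((t:ℂ) + (c:ℂ) * Complex.I) ^ 2)⁻¹ * Complex.exp (Complex.I * k * t) with hg0
  have h3 : (fun v : ℝ => Complex.exp (((-2 * π * v * -k : ℝ) : ℂ) * Complex.I) • 𝓕 (melF c) v)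
      = fun v => g0 (2 * π * v) := by
    funext v
    rw [melF_fourier c hc v, smul_eq_mul, hg0]
    simp only []
    rw [mul_comm]
    congr 2
    push_cast
    ring
  rw [h3, MeasureTheory.Measure.integral_comp_mul_left g0 (2 * π),
    abs_of_pos (by positivity : (0:ℝ) < (2*π)⁻¹)] at h2
  have h5 : (∫ t, g0 t) = (2*π : ℝ) • ((2*π : ℝ)⁻¹ • ∫ t, g0 t) := by
    rw [smul_smul, mul_inv_cancel₀ (by positivity), one_smul]
  rw [h5, h2, Complex.real_smul]

lemma melnikov_main (c : ℝ) (hc : c < 0) (k : ℤ) :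
    (∫ t : ℝ, (((t : ℂ) + (c : ℂ) * Complex.I) ^ 2)⁻¹ *
        Complex.exp (Complex.I * k * ((t : ℂ) + (c : ℂ) * Complex.I)))
      = Complex.exp (-((k:ℂ) * (c:ℂ))) * (((2 * π : ℝ) : ℂ) * melF c (k:ℝ)) := by
  have hsplit : ∀ t : ℝ, (((t:ℂ) + (c:ℂ) * Complex.I) ^ 2)⁻¹ *
      Complex.exp (Complex.I * (k:ℂ) * ((t:ℂ) + (c:ℂ) * Complex.I))
      = Complex.exp (-((k:ℂ) * (c:ℂ))) *
        ((((t:ℂ) + (c:ℂ) * Complex.I) ^ 2)⁻¹ * Complex.exp (Complex.I * ((k:ℝ):ℂ) * t)) := by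
    intro t
    rw [show Complex.I * (k:ℂ) * ((t:ℂ) + (c:ℂ) * Complex.I)
        = Complex.I * ((k:ℝ):ℂ) * t + -((k:ℂ) * (c:ℂ)) by
      push_cast
      linear_combination ((k:ℂ) * (c:ℂ)) * Complex.I_sq]
    rw [Complex.exp_add]
    ring
  simp_rw [hsplit]
  rw [MeasureTheory.integral_const_mul, melnikov_G c hc (k:ℝ)]

/-- The residue computation for the inner Melnikov potential: along a horizontal
line `Im s = c < 0`, `∫ s^{-2} e^{iks} ds = -2πk` for `k ≥ 1` and `= 0` for
`k ≤ -1`; consequently, if `V^[0] = 0`, the inner Melnikov potential equals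
`-Σ_{k≥1} (πk V^[k]/4) e^{ik(θ-v)}`. -/
theorem stmt_13 (c : ℝ) (hc : c < 0) :
    (∀ k : ℤ, 1 ≤ k →
      ∫ t : ℝ, (((t : ℂ) + (c : ℂ) * Complex.I) ^ 2)⁻¹ *
          Complex.exp (Complex.I * k * ((t : ℂ) + (c : ℂ) * Complex.I))
        = -2 * (Real.pi : ℂ) * (k : ℂ)) ∧
    (∀ k : ℤ, k ≤ -1 →
      ∫ t : ℝ, (((t : ℂ) + (c : ℂ) * Complex.I) ^ 2)⁻¹ *
          Complex.exp (Complex.I * k * ((t : ℂ) + (c : ℂ) * Complex.I))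
        = 0) ∧
    (∀ (Vk : ℤ → ℂ), Vk 0 = 0 → ∀ v θ : ℂ,
      ∑' k : ℤ, (Vk k / 8) *
          (∫ t : ℝ, (((t : ℂ) + (c : ℂ) * Complex.I) ^ 2)⁻¹ *
            Complex.exp (Complex.I * k * ((t : ℂ) + (c : ℂ) * Complex.I))) *
          Complex.exp (Complex.I * k * (θ - v))
        = -∑' k : ℤ, (if 1 ≤ k then
            ((Real.pi : ℂ) * (k : ℂ) * Vk k / 4) * Complex.exp (Complex.I * k * (θ - v))
          else 0)) := by
  have hpos : ∀ k : ℤ, 1 ≤ k →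
      (∫ t : ℝ, (((t : ℂ) + (c : ℂ) * Complex.I) ^ 2)⁻¹ *
          Complex.exp (Complex.I * k * ((t : ℂ) + (c : ℂ) * Complex.I)))
        = -2 * (Real.pi : ℂ) * (k : ℂ) := by
    intro k hk
    rw [melnikov_main c hc k]
    unfold melF
    rw [max_eq_left (by exact_mod_cast Int.le_of_lt (by omega) : (0:ℝ) ≤ (k:ℝ))]
    have hone : Complex.exp (-((k:ℂ) * (c:ℂ))) * Complex.exp ((c:ℂ) * ((k:ℝ):ℂ)) = 1 := by
      rw [← Complex.exp_add, show -((k:ℂ) * (c:ℂ)) + (c:ℂ) * ((k:ℝ):ℂ) = 0 by push_cast; ring,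
        Complex.exp_zero]
    calc Complex.exp (-((k:ℂ) * (c:ℂ))) *
          (((2 * π : ℝ):ℂ) * (-(((k:ℝ):ℂ)) * Complex.exp ((c:ℂ) * ((k:ℝ):ℂ))))
        = (Complex.exp (-((k:ℂ) * (c:ℂ))) * Complex.exp ((c:ℂ) * ((k:ℝ):ℂ))) *
          (((2 * π : ℝ):ℂ) * -((k:ℝ):ℂ)) := by ring
      _ = -2 * (Real.pi : ℂ) * (k : ℂ) := by rw [hone]; push_cast; ring
  have hneg : ∀ k : ℤ, k ≤ -1 →
      (∫ t : ℝ, (((t : ℂ) + (c : ℂ) * Complex.I) ^ 2)⁻¹ *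
          Complex.exp (Complex.I * k * ((t : ℂ) + (c : ℂ) * Complex.I)))
        = 0 := by
    intro k hk
    rw [melnikov_main c hc k]
    unfold melF
    rw [max_eq_right (by exact_mod_cast Int.le_of_lt (by omega) : (k:ℝ) ≤ 0)]
    simp
  refine ⟨hpos, hneg, ?_⟩
  intro Vk hV0 v θ
  rw [← tsum_neg]
  apply tsum_congr
  intro k
  by_cases hk : 1 ≤ k
  · rw [if_pos hk, hpos k hk]
    ring
  · rw [if_neg hk, neg_zero]
    have hk0 : k ≤ 0 := by omega
    rcases eq_or_lt_of_le hk0 with h | h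
    · rw [h, hV0]
      simp
    · rw [hneg k (by omega)]
      simp
end
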